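/- Let λ>0, ρ(x)=λ^{-1}·exp(-x/λ) for x≥0, p∈(1,∞], and for a>1 set ν_a(t)=-λ·a·ln(1-t) on [0,1). Then sup_{t∈[0,1)} ρ(ν_a(t))·ν_a'(t)·(ν_a(t))^{1/p*} = a^{1+1/p*}·(λ/(e·p*·(a-1)))^{1/p*}, while for a=1 this supremum is infinite. -/

import Mathlib

open MeasureTheory Set ENNReal

private lemma xexp_le (x : ℝ) (_hx : 0 ≤ x) : x * Real.exp (-x) ≤ (Real.exp 1)⁻¹ := by
  have h2 : x ≤ Real.exp (x - 1) := by
    have := Real.add_one_le_exp (x - 1); linarith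
  calc x * Real.exp (-x) ≤ Real.exp (x - 1) * Real.exp (-x) :=
        mul_le_mul_of_nonneg_right h2 (Real.exp_pos (-x)).le
    _ = (Real.exp 1)⁻¹ := by
        rw [← Real.exp_add, ← Real.exp_neg]; congr 1; ring

private lemma core_bound (lam a q c u : ℝ) (hlam : 0 < lam) (ha : 0 < a) (hq : 0 < q)
    (hc : 0 < c) (hu : 0 ≤ u) :
    Real.exp (-(c * u)) * (lam * a * u) ^ q ≤ (lam * a * q / (Real.exp 1 * c)) ^ q := by
  have hx : 0 ≤ c * u / q := by positivity
  have key := xexp_le (c * u / q) hx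
  have inner : lam * a * u * Real.exp (-(c * u / q)) ≤ lam * a * q / (Real.exp 1 * c) := by
    have h := mul_le_mul_of_nonneg_left key (by positivity : (0:ℝ) ≤ lam * a * q / c)
    have he : (0:ℝ) < Real.exp 1 := Real.exp_pos 1
    calc lam * a * u * Real.exp (-(c * u / q))
        = lam * a * q / c * (c * u / q * Real.exp (-(c * u / q))) := by
          field_simp
      _ ≤ lam * a * q / c * (Real.exp 1)⁻¹ := h
      _ = lam * a * q / (Real.exp 1 * c) := by field_simp
  have hexp : Real.exp (-(c * u)) = (Real.exp (-(c * u / q))) ^ q := by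
    rw [← Real.exp_mul]; congr 1; field_simp
  rw [hexp, ← Real.mul_rpow (Real.exp_pos _).le (by positivity)]
  exact Real.rpow_le_rpow (by positivity) (by linarith [inner]) hq.le

private lemma core_eq (lam a q c : ℝ) (hlam : 0 < lam) (ha : 0 < a) (hq : 0 < q)
    (hc : 0 < c) :
    Real.exp (-(c * (q / c))) * (lam * a * (q / c)) ^ q
      = (lam * a * q / (Real.exp 1 * c)) ^ q := by
  have h1 : c * (q / c) = q := by field_simp
  have h2 : Real.exp (-q) = ((Real.exp 1)⁻¹) ^ q := by
    rw [Real.inv_rpow (Real.exp_pos 1).le, Real.exp_one_rpow, Real.exp_neg]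
  rw [h1, h2, ← Real.mul_rpow (by positivity) (by positivity)]
  congr 1
  have he : (0:ℝ) < Real.exp 1 := Real.exp_pos 1
  field_simp

theorem h0_exponential_density
    (lam : ℝ) (hlam : 0 < lam)
    (ρ : ℝ → ℝ) (hρ : ∀ x, ρ x = lam⁻¹ * Real.exp (-x / lam))
    (p : ℝ≥0∞) (hp : 1 < p)
    (pstar : ℝ) (hpstar : 1 / p.toReal + 1 / pstar = 1)
    (hp_top : p = ⊤ → pstar = 1)
    (a : ℝ) (ha : 1 ≤ a)
    (ν ν' : ℝ → ℝ)
    (hν : ∀ t, ν t = -(lam * a) * Real.log (1 - t))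
    (hν' : ∀ t, ν' t = lam * a / (1 - t)) :
    (1 < a →
      ⨆ t ∈ Ico (0:ℝ) 1, ENNReal.ofReal (ρ (ν t) * ν' t * ν t ^ (1 / pstar)) =
        ENNReal.ofReal (a ^ (1 + 1 / pstar) *
          (lam / (Real.exp 1 * pstar * (a - 1))) ^ (1 / pstar))) ∧
    (a = 1 →
      ⨆ t ∈ Ico (0:ℝ) 1, ENNReal.ofReal (ρ (ν t) * ν' t * ν t ^ (1 / pstar)) = ⊤) := by
  have ha0 : 0 < a := by linarith
  have hps : 0 < pstar := by
    rcases eq_or_ne p ⊤ with h | h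
    · rw [hp_top h]; norm_num
    · have h1 : 1 < p.toReal := by
        have := (ENNReal.toReal_lt_toReal (by simp) h).mpr hp
        simpa using this
      have h2 : 1 / p.toReal < 1 := by
        rw [div_lt_one (by linarith)]; linarith
      have h3 : 0 < 1 / p.toReal := by positivity
      have h4 : 0 < 1 / pstar := by linarith
      exact one_div_pos.mp h4
  have hq : 0 < 1 / pstar := one_div_pos.mpr hps
  -- pointwise computation
  have hf : ∀ t ∈ Ico (0:ℝ) 1, ρ (ν t) * ν' t * ν t ^ (1 / pstar)
      = a * (Real.exp (-((a - 1) * (-Real.log (1 - t)))) *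
          (lam * a * (-Real.log (1 - t))) ^ (1 / pstar)) := by
    intro t ht
    obtain ⟨ht0, ht1⟩ := ht
    have h1t : 0 < 1 - t := by linarith
    have hexp : Real.exp (-(-Real.log (1 - t))) = 1 - t := by
      rw [neg_neg, Real.exp_log h1t]
    simp only [hρ, hν, hν']
    have hνt : -(lam * a) * Real.log (1 - t) = lam * a * (-Real.log (1 - t)) := by ring
    rw [hνt]
    have hexp2 : Real.exp (-(lam * a * (-Real.log (1 - t))) / lam)
        = Real.exp (-((a - 1) * (-Real.log (1 - t)))) * (1 - t) := by
      rw [← hexp, ← Real.exp_add]; congr 1; field_simp; simp only [Real.log_exp]; ring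
    rw [hexp2]
    field_simp
  constructor
  · -- a > 1
    intro ha1
    have hc : 0 < a - 1 := by linarith
    have hM : a ^ (1 + 1 / pstar) * (lam / (Real.exp 1 * pstar * (a - 1))) ^ (1 / pstar)
        = a * (lam * a * (1 / pstar) / (Real.exp 1 * (a - 1))) ^ (1 / pstar) := by
      have e1 : a ^ ((1:ℝ) + 1 / pstar) = a * a ^ (1 / pstar) := by
        rw [Real.rpow_add ha0, Real.rpow_one]
      have he : (0:ℝ) < Real.exp 1 := Real.exp_pos 1
      have e2 : lam / (Real.exp 1 * pstar * (a - 1))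
          = lam * (1 / pstar) / (Real.exp 1 * (a - 1)) := by
        field_simp
      rw [e1, e2, mul_assoc, ← Real.mul_rpow ha0.le (by positivity)]
      congr 2
      ring
    refine le_antisymm (iSup₂_le fun t ht => ?_) ?_
    · apply ENNReal.ofReal_le_ofReal
      rw [hf t ht, hM]
      obtain ⟨ht1, ht2⟩ := ht
      have hu : 0 ≤ -Real.log (1 - t) := by
        have := Real.log_nonpos (x := 1 - t) (by linarith) (by linarith)
        linarith
      have := core_bound lam a (1 / pstar) (a - 1) (-Real.log (1 - t)) hlam ha0 hq hc hu
      exact mul_le_mul_of_nonneg_left this ha0.le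
    · set t0 : ℝ := 1 - Real.exp (-(1 / pstar / (a - 1))) with ht0_def
      have hqc : 0 < 1 / pstar / (a - 1) := by positivity
      have hexp1 : Real.exp (-(1 / pstar / (a - 1))) < 1 := by
        calc Real.exp (-(1 / pstar / (a - 1))) < Real.exp 0 :=
              Real.exp_lt_exp.mpr (by linarith)
          _ = 1 := Real.exp_zero
      have ht0 : t0 ∈ Ico (0:ℝ) 1 := by
        constructor
        · rw [ht0_def]; linarith
        · rw [ht0_def]; linarith [Real.exp_pos (-(1 / pstar / (a - 1)))]
      have hlog : -Real.log (1 - t0) = 1 / pstar / (a - 1) := by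
        rw [show (1:ℝ) - t0 = Real.exp (-(1 / pstar / (a - 1))) from by rw [ht0_def]; ring,
          Real.log_exp]; ring
      calc ENNReal.ofReal (a ^ (1 + 1 / pstar) *
              (lam / (Real.exp 1 * pstar * (a - 1))) ^ (1 / pstar))
          = ENNReal.ofReal (ρ (ν t0) * ν' t0 * ν t0 ^ (1 / pstar)) := by
            rw [hf t0 ht0, hlog, hM, core_eq lam a (1 / pstar) (a - 1) hlam ha0 hq hc]
        _ ≤ ⨆ t ∈ Ico (0:ℝ) 1, ENNReal.ofReal (ρ (ν t) * ν' t * ν t ^ (1 / pstar)) :=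
            le_iSup₂_of_le t0 ht0 le_rfl
  · -- a = 1
    intro ha1
    subst ha1
    rw [iSup_eq_top]
    intro b hb
    set M := b.toReal with hM_def
    have hM0 : 0 ≤ M := ENNReal.toReal_nonneg
    set u0 : ℝ := (M + 1) ^ pstar / lam with hu0_def
    have hu0 : 0 ≤ u0 := by positivity
    have hexp1 : Real.exp (-u0) ≤ 1 := by
      calc Real.exp (-u0) ≤ Real.exp 0 := Real.exp_le_exp.mpr (by linarith)
        _ = 1 := Real.exp_zero
    have ht0 : (1 - Real.exp (-u0)) ∈ Ico (0:ℝ) 1 :=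
      ⟨by linarith, by linarith [Real.exp_pos (-u0)]⟩
    refine ⟨1 - Real.exp (-u0), ?_⟩
    rw [iSup_pos ht0, hf _ ht0]
    have hlog : -Real.log (1 - (1 - Real.exp (-u0))) = u0 := by
      rw [show (1:ℝ) - (1 - Real.exp (-u0)) = Real.exp (-u0) from by ring, Real.log_exp]
      ring
    rw [hlog]
    simp only [sub_self, zero_mul, neg_zero, Real.exp_zero, one_mul, mul_one]
    have hl : lam * u0 = (M + 1) ^ pstar := by
      rw [hu0_def]; field_simp
    rw [hl]
    have h2 : ((M + 1) ^ pstar) ^ (1 / pstar) = M + 1 := by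
      rw [one_div, Real.rpow_rpow_inv (by linarith) hps.ne']
    rw [h2]
    calc b = ENNReal.ofReal M := (ENNReal.ofReal_toReal hb.ne).symm
      _ < ENNReal.ofReal (M + 1) := by
          rw [ENNReal.ofReal_lt_ofReal_iff (by linarith)]; linarith
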